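/- Let h(z) = Σ_{k=0}^∞ a_k z^k and g(z) = Σ_{k=1}^∞ b_k z^k be analytic on the unit disk 𝔻 with |h(z)| < 1 and |g'(z)| ≤ |h'(z)| for all z ∈ 𝔻. Then for every r with 0 ≤ r < 1, Σ_{k=1}^∞ k (|a_k|² − |b_k|²) r^{2k} ≤ (1 − |a_0|²)² · r² / (1 − r²)². -/

import Mathlib

open Metric Complex
set_option maxHeartbeats 1000000

lemma radius_ge_one (a : ℕ → ℂ) (n : ℕ) (hn : 1 ≤ n)
    (hsum : ∀ σ : ℝ, 0 ≤ σ → σ < 1 → Summable fun k => a k * (σ:ℂ)^k) :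
    (1:ENNReal) ≤ (FormalMultilinearSeries.ofScalars ℂ (fun m => a (n*m))).radius := by
  apply ENNReal.le_of_forall_nnreal_lt
  intro ρ hρ
  apply FormalMultilinearSeries.le_radius_of_summable
  have hρ1 : (ρ:ℝ) < 1 := by exact_mod_cast hρ
  set t : ℝ := ((ρ:ℝ) + 1)/2 with ht
  have ht0 : 0 < t := by positivity
  have ht1 : t < 1 := by simp only [ht]; linarith
  have hρt : (ρ:ℝ) < t := by simp only [ht]; linarith
  set σ : ℝ := t ^ ((n:ℝ)⁻¹) with hσdef
  have hσ0 : 0 < σ := Real.rpow_pos_of_pos ht0 _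
  have hσ1 : σ < 1 := Real.rpow_lt_one ht0.le ht1 (by positivity)
  have hσn : σ ^ n = t := by
    rw [hσdef, ← Real.rpow_natCast (t ^ ((n:ℝ)⁻¹)) n, ← Real.rpow_mul ht0.le,
      inv_mul_cancel₀ (by positivity), Real.rpow_one]
  have hs := (summable_norm_iff.mpr (hsum σ hσ0.le hσ1))
  set C : ℝ := ∑' k, ‖a k * (σ:ℂ)^k‖ with hC
  have hnorm : ∀ k, ‖a k * (σ:ℂ)^k‖ = ‖a k‖ * σ ^ k := by
    intro k
    simp [Complex.norm_real, _root_.abs_of_nonneg hσ0.le]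
  have hCle : ∀ k, ‖a k‖ * σ ^ k ≤ C := by
    intro k
    rw [← hnorm]
    exact Summable.le_tsum hs k (fun j _ => norm_nonneg _)
  have hgs : Summable (fun m => C * ((ρ:ℝ)/t)^m) := by
    apply Summable.mul_left
    apply summable_geometric_of_lt_one (by positivity)
    rw [div_lt_one ht0]; exact hρt
  refine Summable.of_nonneg_of_le (fun m => by positivity) (fun m => ?_) hgs
  have h1 : ‖FormalMultilinearSeries.ofScalars ℂ (fun m => a (n*m)) m‖ = ‖a (n*m)‖ :=
      FormalMultilinearSeries.ofScalars_norm ℂ (fun m => a (n*m)) m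
  rw [h1]
  have he : ‖a (n*m)‖ * (ρ:ℝ) ^ m
      = (‖a (n*m)‖ * σ ^ (n*m)) * ((ρ:ℝ)/t)^m := by
    rw [pow_mul, hσn]
    field_simp
    have htt : t * ((ρ:ℝ)/t) = ρ := by field_simp
    rw [mul_assoc, ← mul_pow, htt]
  rw [he]
  gcongr
  exact hCle _

lemma coeff_bound (h : ℂ → ℂ) (a : ℕ → ℂ)
    (hha : ∀ z ∈ ball (0:ℂ) 1, HasSum (fun k => a k * z ^ k) (h z))
    (hb : ∀ z ∈ ball (0:ℂ) 1, ‖h z‖ < 1)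
    (n : ℕ) (hn : 1 ≤ n) : ‖a n‖ ≤ 1 - ‖a 0‖ ^ 2 := by
  have hn0 : (n:ℂ) ≠ 0 := by exact_mod_cast Nat.one_le_iff_ne_zero.mp hn
  -- a 0 = h 0
  have ha0 : h 0 = a 0 := by
    refine HasSum.unique (hha 0 (by simp)) ?_
    have : ∀ k ≠ 0, a k * (0:ℂ) ^ k = 0 := fun k hk => by simp [zero_pow hk]
    simpa using hasSum_single (f := fun k => a k * (0:ℂ)^k) 0 this
  have ha0lt : ‖a 0‖ < 1 := ha0 ▸ hb 0 (by simp)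
  -- summability at each real radius
  have hsum : ∀ σ : ℝ, 0 ≤ σ → σ < 1 → Summable fun k => a k * (σ:ℂ)^k := by
    intro σ h0 h1
    exact (hha σ (by simpa [Complex.norm_real, _root_.abs_of_nonneg h0] using h1)).summable
  -- the averaged power series F
  set p : FormalMultilinearSeries ℂ ℂ ℂ := FormalMultilinearSeries.ofScalars ℂ (fun m => a (n*m))
    with hp
  have hrad : (1:ENNReal) ≤ p.radius := radius_ge_one a n hn hsum
  have hFb : HasFPowerSeriesOnBall p.sum p 0 1 :=
    (p.hasFPowerSeriesOnBall (lt_of_lt_of_le one_pos hrad)).mono one_pos hrad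
  set F : ℂ → ℂ := p.sum with hFdef
  have hball : Metric.eball (0:ℂ) (1:ENNReal) = ball (0:ℂ) 1 := by
    rw [show (1:ENNReal) = ((1:NNReal):ENNReal) by norm_num, Metric.emetric_ball_nnreal]
    norm_num
  have hFd : DifferentiableOn ℂ F (ball (0:ℂ) 1) := by
    rw [← hball]
    exact hFb.differentiableOn
  -- F sums
  have hFsum : ∀ w ∈ ball (0:ℂ) 1, HasSum (fun m => a (n*m) * w ^ m) (F w) := by
    intro w hw
    have hw' : w ∈ Metric.eball (0:ℂ) 1 := by rwa [hball]
    have := hFb.hasSum hw'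
    simp only [zero_add] at this
    refine this.congr_fun fun m => ?_
    rw [hp, FormalMultilinearSeries.ofScalars_apply_eq]
    simp [mul_comm]
  have hF0 : F 0 = a 0 := by
    have h2 : ∀ m ≠ 0, a (n*m) * (0:ℂ) ^ m = 0 := fun m hm => by simp [zero_pow hm]
    have h3 := hasSum_single (f := fun m => a (n*m) * (0:ℂ)^m) 0 h2
    simp only [mul_zero, pow_zero, mul_one] at h3
    have := (hFsum 0 (by simp)).unique h3
    simpa using this
  -- primitive root
  set ω : ℂ := Complex.exp (2 * Real.pi * Complex.I / n) with hω
  have hprim : IsPrimitiveRoot ω n :=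
    Complex.isPrimitiveRoot_exp n (Nat.one_le_iff_ne_zero.mp hn)
  have hωn : ω ^ n = 1 := hprim.pow_eq_one
  have hωabs : ‖ω‖ = 1 := by
    have : ω = Complex.exp (((2 * Real.pi / n : ℝ) : ℂ) * Complex.I) := by
      rw [hω]; push_cast; ring_nf
    rw [this, Complex.norm_exp_ofReal_mul_I]
  -- the averaging identity
  have key : ∀ z ∈ ball (0:ℂ) 1, (n:ℂ) * F (z^n) = ∑ j ∈ Finset.range n, h (ω^j * z) := by
    intro z hz
    have hz1 : ‖z‖ < 1 := by simpa [Complex.dist_eq] using hz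
    have hmem : ∀ j : ℕ, ω^j * z ∈ ball (0:ℂ) 1 := by
      intro j
      simp only [mem_ball, Complex.dist_eq, sub_zero, norm_mul, norm_pow, hωabs, one_pow, one_mul]
      exact hz1
    have hS : HasSum (fun k => ∑ j ∈ Finset.range n, a k * (ω^j * z) ^ k)
        (∑ j ∈ Finset.range n, h (ω^j * z)) :=
      hasSum_sum fun j _ => hha _ (hmem j)
    -- rewrite the summand
    have hre : ∀ k, (∑ j ∈ Finset.range n, a k * (ω^j * z) ^ k)
        = if n ∣ k then (n:ℂ) * (a k * z ^ k) else 0 := by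
      intro k
      have : ∀ j, a k * (ω^j * z) ^ k = (a k * z ^ k) * ((ω^k) ^ j) := by
        intro j
        rw [mul_pow, ← pow_mul, ← pow_mul', pow_mul]
        ring
      rw [Finset.sum_congr rfl fun j _ => this j, ← Finset.mul_sum]
      by_cases hdvd : n ∣ k
      · rw [if_pos hdvd]
        have : ω ^ k = 1 := (hprim.pow_eq_one_iff_dvd k).mpr hdvd
        simp [this]
        ring
      · rw [if_neg hdvd]
        have hne : ω ^ k ≠ 1 := fun hc => hdvd ((hprim.pow_eq_one_iff_dvd k).mp hc)
        rw [geom_sum_eq hne]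
        have : (ω ^ k) ^ n = 1 := by rw [← pow_mul, mul_comm, pow_mul, hωn, one_pow]
        rw [this]
        simp
    have hS' : HasSum (fun k => if n ∣ k then (n:ℂ) * (a k * z ^ k) else 0)
        (∑ j ∈ Finset.range n, h (ω^j * z)) := by
      refine hS.congr_fun fun k => ?_
      rw [hre]
    -- reindex over multiples of n
    have hinj : Function.Injective (fun m : ℕ => n * m) :=
      fun x y hxy => by
        have := mul_left_cancel₀ (Nat.one_le_iff_ne_zero.mp hn) hxy
        exact this
    have hvan : ∀ k ∉ Set.range (fun m : ℕ => n * m),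
        (if n ∣ k then (n:ℂ) * (a k * z ^ k) else 0) = 0 := by
      intro k hk
      rw [if_neg]
      intro ⟨m, hm⟩
      exact hk ⟨m, hm.symm⟩
    have hS2 := (hinj.hasSum_iff hvan).mpr hS'
    simp only [Function.comp_def] at hS2
    have hS3 : HasSum (fun m => (n:ℂ) * (a (n*m) * z ^ (n*m)))
        (∑ j ∈ Finset.range n, h (ω^j * z)) := by
      refine hS2.congr_fun fun m => ?_
      rw [if_pos (Dvd.intro m rfl)]
    -- the other evaluation
    have hzn : z^n ∈ ball (0:ℂ) 1 := by
      simp only [mem_ball, Complex.dist_eq, sub_zero, norm_pow]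
      exact pow_lt_one₀ (norm_nonneg z) hz1 (Nat.one_le_iff_ne_zero.mp hn)
    have hS4 := ((hFsum (z^n) hzn).mul_left (n:ℂ)).congr_fun
      (fun m => by rw [← pow_mul])
    exact (hS3.unique hS4).symm
  -- |F| < 1 on the ball
  have hFlt : ∀ w ∈ ball (0:ℂ) 1, ‖F w‖ < 1 := by
    intro w hw
    have hw1 : ‖w‖ < 1 := by simpa [Complex.dist_eq] using hw
    by_cases hw0 : w = 0
    · rw [hw0, hF0]; exact ha0lt
    · set z : ℂ := w ^ ((n:ℂ)⁻¹) with hzdef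
      have hzn : z ^ n = w := Complex.cpow_nat_inv_pow w (Nat.one_le_iff_ne_zero.mp hn)
      have hz1 : ‖z‖ < 1 := by
        by_contra hc
        push_neg at hc
        have : (1:ℝ) ≤ ‖z‖ ^ n := one_le_pow₀ hc
        rw [← norm_pow, hzn] at this
        linarith
      have hzb : z ∈ ball (0:ℂ) 1 := by
        simpa [Complex.dist_eq] using hz1
      have hk := key z hzb
      rw [hzn] at hk
      have habs : (n:ℝ) * ‖F w‖ < n := by
        calc (n:ℝ) * ‖F w‖ = ‖(n:ℂ) * F w‖ := by
              rw [norm_mul, Complex.norm_natCast]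
          _ = ‖∑ j ∈ Finset.range n, h (ω^j * z)‖ := by rw [hk]
          _ ≤ ∑ j ∈ Finset.range n, ‖h (ω^j * z)‖ := by
              simpa using norm_sum_le (Finset.range n) (fun j => h (ω^j * z))
          _ < ∑ j ∈ Finset.range n, 1 := by
              refine Finset.sum_lt_sum_of_nonempty ⟨0, Finset.mem_range.mpr hn⟩ fun j _ => ?_
              refine hb _ ?_
              simp only [mem_ball, Complex.dist_eq, sub_zero, norm_mul, norm_pow, hωabs,
                one_pow, one_mul]
              exact hz1
          _ = n := by simp
      have hnpos : (0:ℝ) < n := by exact_mod_cast Nat.pos_of_ne_zero (Nat.one_le_iff_ne_zero.mp hn)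
      nlinarith
  -- derivative of F at 0
  have hFderiv : HasDerivAt F (a n) 0 := by
    have := hFb.hasFPowerSeriesAt.hasDerivAt
    have hcoe : (p 1 fun _ => (1:ℂ)) = a n := by
      rw [hp, FormalMultilinearSeries.ofScalars_apply_eq]
      simp
    rwa [hcoe] at this
  -- the Möbius transform
  set c : ℂ := (starRingEnd ℂ) (a 0) with hc
  set φ : ℂ → ℂ := fun w => (F w - a 0) / (1 - c * F w) with hφ
  have hden : ∀ w ∈ ball (0:ℂ) 1, 1 - c * F w ≠ 0 := by
    intro w hw hcon
    have h1 : ‖c * F w‖ < 1 := by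
      rw [norm_mul, hc, Complex.norm_conj]
      have h2 := hFlt w hw
      nlinarith [norm_nonneg (F w), norm_nonneg (a 0), ha0lt]
    have : (1:ℂ) = c * F w := by linear_combination hcon
    rw [← this] at h1
    simp at h1
  have hφd : DifferentiableOn ℂ φ (ball (0:ℂ) 1) := by
    apply DifferentiableOn.div
    · exact hFd.sub_const _
    · exact (differentiableOn_const _).sub ((hFd.const_mul c))
    · exact hden
  have hmobius : ∀ α β : ℂ, ‖α‖ < 1 → ‖β‖ < 1 →
      ‖(α - β)/(1 - (starRingEnd ℂ) β * α)‖ < 1 := by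
    intro α β hα hβ
    have hid : Complex.normSq (1 - (starRingEnd ℂ) β * α) - Complex.normSq (α - β)
        = (1 - Complex.normSq α) * (1 - Complex.normSq β) := by
      simp only [Complex.normSq_apply, Complex.sub_re, Complex.sub_im, Complex.one_re,
        Complex.one_im, Complex.mul_re, Complex.mul_im, Complex.conj_re, Complex.conj_im]
      ring
    have hα2 : Complex.normSq α < 1 := by
      rw [← Complex.sq_norm]; nlinarith [norm_nonneg α]
    have hβ2 : Complex.normSq β < 1 := by
      rw [← Complex.sq_norm]; nlinarith [norm_nonneg β]
    have hlt : Complex.normSq (α - β) < Complex.normSq (1 - (starRingEnd ℂ) β * α) := by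
      nlinarith
    have hdenne : ‖1 - (starRingEnd ℂ) β * α‖ > 0 := by
      rw [← Complex.sq_norm, ← Complex.sq_norm] at hlt
      have h1 : 0 ≤ ‖α - β‖ := norm_nonneg _
      nlinarith [norm_nonneg (1 - (starRingEnd ℂ) β * α)]
    rw [norm_div, div_lt_one hdenne]
    rw [← Complex.sq_norm, ← Complex.sq_norm] at hlt
    exact lt_of_pow_lt_pow_left₀ 2 hdenne.le hlt
  have hφmaps : Set.MapsTo φ (ball (0:ℂ) 1) (ball (φ 0) 1) := by
    have hφ0 : φ 0 = 0 := by
      rw [hφ]; simp only []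
      rw [hF0]
      simp
    rw [hφ0]
    intro w hw
    simp only [mem_ball, Complex.dist_eq, sub_zero]
    exact hmobius (F w) (a 0) (hFlt w hw) ha0lt
  -- compute deriv φ 0
  set t : ℝ := Complex.normSq (a 0) with htdef
  have ht1 : t < 1 := by
    rw [htdef, ← Complex.sq_norm]; nlinarith [norm_nonneg (a 0)]
  have htne : (1:ℂ) - (t:ℂ) ≠ 0 := by
    intro hcon
    have : (t:ℂ) = 1 := by linear_combination -hcon
    have : t = 1 := by exact_mod_cast this
    linarith
  have hφderiv : HasDerivAt φ (a n / (1 - (t:ℂ))) 0 := by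
    have hnum : HasDerivAt (fun w => F w - a 0) (a n) 0 := hFderiv.sub_const _
    have hden' : HasDerivAt (fun w => 1 - c * F w) (-(c * a n)) 0 := by
      have := (hFderiv.const_mul c).const_sub 1
      simpa using this
    have hd0 : (1 : ℂ) - c * F 0 ≠ 0 := hden 0 (by simp)
    have hdiv := hnum.div hden' hd0
    have hFc : c * a 0 = (t:ℂ) := by
      rw [hc, htdef, mul_comm, Complex.mul_conj]
    rw [hF0, hFc] at hdiv
    refine hdiv.congr_deriv ?_
    rw [sub_self, zero_mul, sub_zero, pow_two, mul_div_mul_right _ _ htne]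
  have hSchwarz : ‖deriv φ 0‖ ≤ 1 / 1 :=
    Complex.norm_deriv_le_div_of_mapsTo_ball hφd (hφmaps.mono_right ball_subset_closedBall) one_pos
  rw [hφderiv.deriv] at hSchwarz
  rw [norm_div] at hSchwarz
  have habs1t : ‖1 - (t:ℂ)‖ = 1 - t := by
    have : ((1 - t : ℝ) : ℂ) = 1 - (t:ℂ) := by push_cast; ring
    rw [← this, Complex.norm_real, Real.norm_eq_abs, _root_.abs_of_nonneg (by linarith)]
  rw [habs1t] at hSchwarz
  have h1t : (0:ℝ) < 1 - t := by linarith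
  rw [div_le_div_iff₀ h1t one_pos] at hSchwarz
  have : ‖a n‖ ≤ 1 - t := by linarith
  rw [htdef, ← Complex.sq_norm] at this
  exact this

/-- Area bound: if `h(z) = ∑ aₖ zᵏ` and `g(z) = ∑ bₖ zᵏ` are analytic on the unit disk with
`|h| < 1` and `|g'| ≤ |h'|`, then for `0 ≤ r < 1`,
`∑_{k≥1} k (|aₖ|² - |bₖ|²) r^{2k} ≤ (1-|a₀|²)² r²/(1-r²)²`. -/
theorem stmt15 (h g : ℂ → ℂ) (a b : ℕ → ℂ) (hb0 : b 0 = 0)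
    (hha : ∀ z ∈ ball (0:ℂ) 1, HasSum (fun k => a k * z ^ k) (h z))
    (hga : ∀ z ∈ ball (0:ℂ) 1, HasSum (fun k => b k * z ^ k) (g z))
    (hhd : DifferentiableOn ℂ h (ball (0:ℂ) 1))
    (hgd : DifferentiableOn ℂ g (ball (0:ℂ) 1))
    (hb : ∀ z ∈ ball (0:ℂ) 1, ‖h z‖ < 1)
    (hd : ∀ z ∈ ball (0:ℂ) 1, ‖deriv g z‖ ≤ ‖deriv h z‖)
    (r : ℝ) (hr0 : 0 ≤ r) (hr : r < 1) :
    (∑' k : ℕ, ((k:ℝ)+1) * ((‖a (k+1)‖)^2 - (‖b (k+1)‖)^2)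
        * r ^ (2*(k+1)))
      ≤ (1 - (‖a 0‖)^2)^2 * r^2 / (1 - r^2)^2 := by
  have ha0 : h 0 = a 0 := by
    refine HasSum.unique (hha 0 (by simp)) ?_
    have : ∀ k ≠ 0, a k * (0:ℂ) ^ k = 0 := fun k hk => by simp [zero_pow hk]
    simpa using hasSum_single (f := fun k => a k * (0:ℂ)^k) 0 this
  have ha0lt : ‖a 0‖ < 1 := ha0 ▸ hb 0 (by simp)
  have hcoef : ∀ n : ℕ, 1 ≤ n → ‖a n‖ ≤ 1 - ‖a 0‖ ^ 2 :=
    coeff_bound h a hha hb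
  set A : ℝ := ‖a 0‖ with hA
  have hA0 : 0 ≤ A := norm_nonneg _
  have hA2 : 0 ≤ 1 - A^2 := by nlinarith
  set x : ℝ := r^2 with hx
  have hx0 : 0 ≤ x := sq_nonneg r
  have hx1 : x < 1 := by nlinarith
  set u : ℕ → ℝ := fun k => (1 - A^2)^2 * (((k:ℝ)+1) * x^(k+1)) with hu
  -- summability of the dominating series
  have hvsum : Summable (fun n : ℕ => (n:ℝ) * x^n) := by
    have := summable_pow_mul_geometric_of_norm_lt_one (R := ℝ) 1 (r := x)
      (by rw [Real.norm_eq_abs, _root_.abs_of_nonneg hx0]; exact hx1)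
    simpa using this
  have hshift : Summable (fun k : ℕ => ((k:ℝ)+1) * x^(k+1)) := by
    have := hvsum.comp_injective (add_left_injective 1)
    refine this.congr fun k => ?_
    simp only [Function.comp_apply]
    push_cast
    ring
  have husum : Summable u := hshift.mul_left _
  have htsum_shift : (∑' k : ℕ, ((k:ℝ)+1) * x^(k+1)) = x / (1-x)^2 := by
    have h0 := Summable.tsum_eq_zero_add (f := fun n : ℕ => (n:ℝ) * x^n) hvsum
    have hgeo : (∑' n : ℕ, (n:ℝ) * x^n) = x / (1-x)^2 :=
      tsum_coe_mul_geometric_of_norm_lt_one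
        (by rw [Real.norm_eq_abs, _root_.abs_of_nonneg hx0]; exact hx1)
    rw [hgeo] at h0
    simp only [Nat.cast_zero, zero_mul, pow_zero, zero_add] at h0
    rw [h0]
    apply tsum_congr
    intro k
    push_cast
    ring
  have hutsum : (∑' k, u k) = (1 - A^2)^2 * x / (1-x)^2 := by
    rw [hu, tsum_mul_left, htsum_shift]
    ring
  set f : ℕ → ℝ := fun k => ((k:ℝ)+1) * ((‖a (k+1)‖)^2 - (‖b (k+1)‖)^2)
      * r ^ (2*(k+1)) with hf
  have hfu : ∀ k, f k ≤ u k := by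
    intro k
    have hbound := hcoef (k+1) (Nat.le_add_left 1 k)
    have ha2 : (‖a (k+1)‖)^2 ≤ (1 - A^2)^2 := by
      have := norm_nonneg (a (k+1))
      nlinarith
    have hb2 : (0:ℝ) ≤ (‖b (k+1)‖)^2 := sq_nonneg _
    have hrp : r ^ (2*(k+1)) = x^(k+1) := by rw [hx, ← pow_mul]
    simp only [hf, hu]
    rw [hrp]
    have hxk : (0:ℝ) ≤ x^(k+1) := pow_nonneg hx0 _
    have hk1 : (0:ℝ) ≤ (k:ℝ)+1 := by positivity
    have h3 : ‖a (k+1)‖^2 - ‖b (k+1)‖^2 ≤ (1-A^2)^2 := by linarith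
    calc ((k:ℝ)+1) * ((‖a (k+1)‖)^2 - (‖b (k+1)‖)^2) * x^(k+1)
        ≤ ((k:ℝ)+1) * (1-A^2)^2 * x^(k+1) :=
          mul_le_mul_of_nonneg_right (mul_le_mul_of_nonneg_left h3 hk1) hxk
      _ = (1-A^2)^2 * (((k:ℝ)+1) * x^(k+1)) := by ring
  by_cases hs : Summable f
  · calc (∑' k, f k) ≤ ∑' k, u k := Summable.tsum_le_tsum hfu hs husum
      _ = (1 - A^2)^2 * x / (1-x)^2 := hutsum
      _ = (1 - A^2)^2 * r^2 / (1-r^2)^2 := by rw [hx]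
  · rw [tsum_eq_zero_of_not_summable hs]
    positivity
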